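/- arXiv:2502.05243 — 3 statements merged into one kernel-verified Lean document; each statement's English description precedes it below -/
import Mathlib

section
/- Let n ≥ 3, m ≥ 1, M = circ(−2,1,0,…,0,1), and let X(t) ∈ ℂ^n solve dX/dt = (−1)^{m+1} M^m X with X(0) = X^0 = ∑_{k=0}^{n−1} a_k P_k. Then X(t) converges as t → ∞ to the constant polygon a_0·(1,…,1)^T, where a_0 = (1/n)∑_{j=0}^{n−1} X^0_j is the centre of mass of X^0, and the convergence is exponential with rate λ_{m,1} = −4^m sin^{2m}(π/n): |X(t) − a_0·(1,…,1)^T| ≤ e^{λ_{m,1} t} |X^0 − a_0·(1,…,1)^T|. -/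
open Complex Real Filter

/-- The n×n circulant matrix circ(−2,1,0,…,0,1) over ℂ. -/
def cycMC (n : ℕ) [NeZero n] : Matrix (Fin n) (Fin n) ℂ :=
  Matrix.of fun i j =>
    (if i = j then (-2 : ℂ) else 0) + (if i = j + 1 then 1 else 0) + (if j = i + 1 then 1 else 0)

/-- The discrete Fourier vector P_k, as an element of Euclidean space ℂ^n. -/
noncomputable def fourierP (n : ℕ) (k : Fin n) : EuclideanSpace ℂ (Fin n) :=
  WithLp.toLp 2 (fun j => Complex.exp (2 * Real.pi * Complex.I / n) ^ ((j : ℕ) * (k : ℕ)))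

/-- The eigenvalue λ_{m,k} = −4^m sin^{2m}(πk/n). -/
noncomputable def lam (n m k : ℕ) : ℝ := -(4 : ℝ) ^ m * Real.sin (Real.pi * k / n) ^ (2 * m)

lemma pow_mod_eq {z : ℂ} {n : ℕ} (hz : z ^ n = 1) (x : ℕ) : z ^ (x % n) = z ^ x := by
  conv_rhs => rw [← Nat.div_add_mod x n]
  rw [pow_add, pow_mul, hz, one_pow, one_mul]

lemma ESum_apply {n : ℕ} {ι : Type*} (s : Finset ι) (f : ι → EuclideanSpace ℂ (Fin n)) (j : Fin n) :
    (∑ i ∈ s, f i) j = ∑ i ∈ s, f i j := by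
  induction s using Finset.cons_induction with
  | empty => rfl
  | cons i s hi ih => rw [Finset.sum_cons, Finset.sum_cons, ← ih]; rfl

lemma Esmul_apply {n : ℕ} (c : ℂ) (x : EuclideanSpace ℂ (Fin n)) (j : Fin n) :
    (c • x) j = c * x j := rfl

lemma Esub_apply {n : ℕ} (x y : EuclideanSpace ℂ (Fin n)) (j : Fin n) :
    (x - y) j = x j - y j := rfl

lemma eigen_basic (n : ℕ) [NeZero n] (k : Fin n) :
    (cycMC n).mulVec (fourierP n k) = (((lam n 1 k : ℝ) : ℂ)) • fourierP n k := by
  have hω : IsPrimitiveRoot (Complex.exp (2 * Real.pi * Complex.I / n)) n :=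
    Complex.isPrimitiveRoot_exp n (NeZero.ne n)
  set ω := Complex.exp (2 * Real.pi * Complex.I / n) with hωdef
  have hωn : ω ^ n = 1 := hω.pow_eq_one
  have hω0 : ω ≠ 0 := Complex.exp_ne_zero _
  set ζ : ℂ := ω ^ (k : ℕ) with hζdef
  have hζn : ζ ^ n = 1 := by
    rw [hζdef, ← pow_mul, mul_comm, pow_mul, hωn, one_pow]
  have hζ0 : ζ ≠ 0 := pow_ne_zero _ hω0
  have hv : ∀ j : Fin n, fourierP n k j = ζ ^ (j : ℕ) := by
    intro j
    show ω ^ ((j : ℕ) * (k : ℕ)) = ζ ^ (j : ℕ)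
    rw [hζdef, ← pow_mul, mul_comm]
  have hstep : ∀ i : Fin n, fourierP n k (i + 1) = ζ * fourierP n k i := by
    intro i
    rw [hv, hv, Fin.val_add, pow_mod_eq hζn, pow_add, Fin.val_one', pow_mod_eq hζn, pow_one]
    ring
  have hprev : ∀ i : Fin n, fourierP n k (i - 1) = ζ⁻¹ * fourierP n k i := by
    intro i
    have h := hstep (i - 1)
    rw [sub_add_cancel] at h
    rw [h]
    field_simp
  -- scalar identity
  have hmu : ((lam n 1 k : ℝ) : ℂ) = ζ + ζ⁻¹ - 2 := by
    have hn0 : (n : ℂ) ≠ 0 := Nat.cast_ne_zero.2 (NeZero.ne n)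
    have hζexp : ζ = Complex.exp (((2 * (Real.pi * k / n) : ℝ) : ℂ) * Complex.I) := by
      rw [hζdef, hωdef, ← Complex.exp_nat_mul]
      congr 1
      push_cast
      field_simp
    have hζinv : ζ⁻¹ = Complex.exp (-(((2 * (Real.pi * k / n) : ℝ) : ℂ) * Complex.I)) := by
      rw [hζexp, ← Complex.exp_neg]
    have hsum : ζ + ζ⁻¹ = ((2 * Real.cos (2 * (Real.pi * k / n)) : ℝ) : ℂ) := by
      rw [hζinv, hζexp, neg_mul_eq_neg_mul, Complex.exp_mul_I, Complex.exp_mul_I]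
      rw [Complex.cos_neg, Complex.sin_neg]
      push_cast [Complex.ofReal_cos, Complex.ofReal_sin]
      ring
    rw [hsum]
    have hr : lam n 1 k = 2 * Real.cos (2 * (Real.pi * k / n)) - 2 := by
      rw [lam]
      linear_combination (-2 : ℝ) * Real.cos_two_mul (Real.pi * k / n)
        + (-4 : ℝ) * Real.sin_sq_add_cos_sq (Real.pi * k / n)
    rw [hr]
    push_cast
    ring
  funext i
  have hcomp : (cycMC n).mulVec (fourierP n k) i
      = -2 * fourierP n k i + fourierP n k (i - 1) + fourierP n k (i + 1) := by
    have e1 : ∀ j : Fin n, (i = j + 1) = (j = i - 1) := by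
      intro j
      apply propext
      constructor
      · intro h; rw [h]; simp
      · intro h; rw [h]; simp
    show ∑ j, cycMC n i j * fourierP n k j = _
    have expand : ∀ j : Fin n, cycMC n i j * fourierP n k j =
        (if i = j then -2 * fourierP n k j else 0) + ((if j = i - 1 then fourierP n k j else 0)
        + (if j = i + 1 then fourierP n k j else 0)) := by
      intro j
      simp only [cycMC, Matrix.of_apply, e1]
      split_ifs <;> ring
    rw [Finset.sum_congr rfl fun j _ => expand j, Finset.sum_add_distrib, Finset.sum_add_distrib]
    simp only [Finset.sum_ite_eq, Finset.sum_ite_eq', Finset.mem_univ, if_true]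
    ring
  rw [hcomp, Pi.smul_apply, smul_eq_mul, hmu, hstep, hprev]
  ring

lemma eigen_pow (n : ℕ) [NeZero n] (m : ℕ) (k : Fin n) :
    (cycMC n ^ m).mulVec (fourierP n k) = (((lam n 1 k : ℝ) : ℂ) ^ m) • fourierP n k := by
  induction m with
  | zero => simp [Matrix.one_mulVec]
  | succ m ih =>
    rw [pow_succ, ← Matrix.mulVec_mulVec, eigen_basic, Matrix.mulVec_smul, ih, pow_succ]
    rw [smul_smul, mul_comm]

lemma scalar_id (n m k : ℕ) (hm : 1 ≤ m) :
    ((-1 : ℂ)) ^ (m + 1) * ((lam n 1 k : ℝ) : ℂ) ^ m = ((lam n m k : ℝ) : ℂ) := by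
  have hr : (-1 : ℝ) ^ (m + 1) * (lam n 1 k) ^ m = lam n m k := by
    set s : ℝ := Real.sin (Real.pi * k / n)
    have h1 : ((-1 : ℝ) ^ m) ^ 2 = 1 := by
      rw [← pow_mul, mul_comm, pow_mul]
      norm_num
    have h2 : (-(4 * s ^ 2) : ℝ) ^ m = (-1) ^ m * (4 ^ m * s ^ (2 * m)) := by
      rw [neg_pow, mul_pow, ← pow_mul]
    rw [lam, lam, show -(4 : ℝ) ^ 1 * s ^ (2 * 1) = -(4 * s ^ 2) by ring, h2, pow_succ]
    linear_combination (-(4 : ℝ) ^ m * s ^ (2 * m)) * h1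
  calc ((-1 : ℂ)) ^ (m + 1) * ((lam n 1 k : ℝ) : ℂ) ^ m
      = (((-1 : ℝ) ^ (m + 1) * (lam n 1 k) ^ m : ℝ) : ℂ) := by push_cast; ring
    _ = _ := by rw [hr]

lemma eigen_full (n : ℕ) [NeZero n] (m : ℕ) (hm : 1 ≤ m) (k : Fin n) :
    ((-1 : ℂ) ^ (m + 1)) • (cycMC n ^ m).mulVec (fourierP n k)
      = ((lam n m k : ℝ) : ℂ) • fourierP n k := by
  rw [eigen_pow, smul_smul, scalar_id n m k hm]

lemma lam_zero (n m : ℕ) (hm : 1 ≤ m) : lam n m 0 = 0 := by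
  have h : Real.sin (Real.pi * (0 : ℕ) / n) = 0 := by norm_num
  rw [lam, h, zero_pow (by omega : 2 * m ≠ 0), mul_zero]

lemma lam_neg (n m : ℕ) (hn : 3 ≤ n) (hm : 1 ≤ m) : lam n m 1 < 0 := by
  have hπ := Real.pi_pos
  have hn0 : (0 : ℝ) < n := by exact_mod_cast Nat.pos_of_ne_zero (by omega)
  have hs : 0 < Real.sin (Real.pi * (1 : ℕ) / n) := by
    apply Real.sin_pos_of_pos_of_lt_pi
    · positivity
    · rw [Nat.cast_one, mul_one]
      exact div_lt_self hπ (by exact_mod_cast by omega : (1:ℝ) < n)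
  rw [lam, neg_mul]
  have : 0 < (4:ℝ) ^ m * Real.sin (Real.pi * (1 : ℕ) / n) ^ (2 * m) := by positivity
  linarith

lemma sin_bound (n : ℕ) [NeZero n] (hn : 3 ≤ n) (k : Fin n) (hk : k ≠ 0) :
    Real.sin (Real.pi * (1 : ℕ) / n) ≤ Real.sin (Real.pi * (k : ℕ) / n) := by
  have hπ := Real.pi_pos
  have hn0 : (0 : ℝ) < n := by exact_mod_cast Nat.pos_of_ne_zero (by omega)
  have hkv : (k : ℕ) ≠ 0 := fun h => hk (Fin.ext (by simp [h]))
  have hk1 : (1 : ℝ) ≤ ((k : ℕ) : ℝ) := by exact_mod_cast Nat.one_le_iff_ne_zero.2 hkv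
  have hkn : (((k : ℕ) : ℝ)) + 1 ≤ n := by exact_mod_cast Nat.succ_le_of_lt k.isLt
  set x := Real.pi * ((k : ℕ) : ℝ) / n with hxdef
  have hx1 : Real.pi * (1 : ℕ) / n ≤ x := by rw [hxdef]; gcongr; exact_mod_cast hk1
  have h1pos : 0 < Real.pi * (1 : ℕ) / n := by positivity
  have h1half : Real.pi * (1 : ℕ) / n ≤ Real.pi / 2 := by
    rw [Nat.cast_one, mul_one, div_le_div_iff₀ hn0 two_pos]
    nlinarith
  by_cases hhalf : x ≤ Real.pi / 2
  · exact Real.strictMonoOn_sin.monotoneOn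
      ⟨by linarith, by linarith⟩ ⟨by linarith, hhalf⟩ hx1
  · rw [← Real.sin_pi_sub x]
    have key2 : x + Real.pi * (1 : ℕ) / n ≤ Real.pi := by
      have he : x + Real.pi * (1 : ℕ) / n = Real.pi * (((k : ℕ) : ℝ) + 1) / n := by
        rw [hxdef, ← add_div]
        congr 1
        push_cast
        ring
      rw [he, div_le_iff₀ hn0]
      nlinarith
    exact Real.strictMonoOn_sin.monotoneOn
      ⟨by linarith, h1half⟩ ⟨by linarith, by linarith⟩ (by linarith)

lemma lam_le (n m : ℕ) [NeZero n] (hn : 3 ≤ n) (hm : 1 ≤ m) (k : Fin n) (hk : k ≠ 0) :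
    lam n m (k : ℕ) ≤ lam n m 1 := by
  have h0 : 0 ≤ Real.sin (Real.pi * (1 : ℕ) / n) := by
    have hπ := Real.pi_pos
    have hn0 : (0 : ℝ) < n := by exact_mod_cast Nat.pos_of_ne_zero (by omega)
    apply Real.sin_nonneg_of_nonneg_of_le_pi
    · positivity
    · rw [Nat.cast_one, mul_one]
      exact le_of_lt (div_lt_self hπ (by exact_mod_cast by omega : (1:ℝ) < n))
  rw [lam, lam, neg_mul, neg_mul, neg_le_neg_iff]
  gcongr
  exact sin_bound n hn k hk

lemma geom_zero {n : ℕ} {z : ℂ} (hz : z ^ n = 1) (h1 : z ≠ 1) :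
    ∑ j ∈ Finset.range n, z ^ j = 0 := by
  rw [geom_sum_eq h1, hz, sub_self, zero_div]

lemma conj_omg (n : ℕ) : (starRingEnd ℂ) (Complex.exp (2 * Real.pi * Complex.I / n))
    = (Complex.exp (2 * Real.pi * Complex.I / n))⁻¹ := by
  rw [← Complex.exp_conj, ← Complex.exp_neg]
  congr 1
  simp [map_div₀, map_ofNat, Complex.conj_I]
  ring

lemma fourierP_inner (n : ℕ) [NeZero n] (k l : Fin n) :
    (inner ℂ (fourierP n k) (fourierP n l) : ℂ) = if k = l then (n : ℂ) else 0 := by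
  have hω : IsPrimitiveRoot (Complex.exp (2 * Real.pi * Complex.I / n)) n :=
    Complex.isPrimitiveRoot_exp n (NeZero.ne n)
  set ω := Complex.exp (2 * Real.pi * Complex.I / n) with hωdef
  have hωn : ω ^ n = 1 := hω.pow_eq_one
  have hω0 : ω ≠ 0 := Complex.exp_ne_zero _
  set ζ : ℂ := (ω ^ (k : ℕ))⁻¹ * ω ^ (l : ℕ) with hζdef
  have hζn : ζ ^ n = 1 := by
    rw [hζdef, mul_pow, inv_pow, ← pow_mul, ← pow_mul, mul_comm (k : ℕ) n, mul_comm (l : ℕ) n,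
      pow_mul, pow_mul, hωn, one_pow, one_pow, inv_one, one_mul]
  have hconj : (starRingEnd ℂ) ω = ω⁻¹ := conj_omg n
  have key : (inner ℂ (fourierP n k) (fourierP n l) : ℂ) = ∑ j ∈ Finset.range n, ζ ^ j := by
    rw [PiLp.inner_apply, ← Fin.sum_univ_eq_sum_range]
    refine Finset.sum_congr rfl fun j _ => ?_
    show ω ^ ((j : ℕ) * (l : ℕ)) * (starRingEnd ℂ) (ω ^ ((j : ℕ) * (k : ℕ))) = ζ ^ (j : ℕ)
    rw [mul_comm (ω ^ ((j : ℕ) * (l : ℕ))), map_pow, hconj, inv_pow, hζdef, mul_pow, inv_pow, ← pow_mul, ← pow_mul,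
      mul_comm (j : ℕ) (k : ℕ), mul_comm (j : ℕ) (l : ℕ)]
  rw [key]
  by_cases hkl : k = l
  · subst hkl
    rw [if_pos rfl, hζdef, inv_mul_cancel₀ (pow_ne_zero _ hω0)]
    simp
  · rw [if_neg hkl]
    refine geom_zero hζn fun h1 => hkl ?_
    have h2 : ω ^ (k : ℕ) = ω ^ (l : ℕ) := by
      have := h1
      rw [hζdef] at this
      field_simp at this
      exact this.symm
    exact Fin.ext (hω.pow_inj k.isLt l.isLt h2)

lemma sum_fourierP (n : ℕ) [NeZero n] (k : Fin n) :
    ∑ j, fourierP n k j = if k = 0 then (n : ℂ) else 0 := by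
  have h := fourierP_inner n 0 k
  rw [PiLp.inner_apply] at h
  simp only [RCLike.inner_apply] at h
  have h0 : ∀ j : Fin n, fourierP n 0 j = 1 := by
    intro j
    show Complex.exp _ ^ ((j : ℕ) * ((0 : Fin n) : ℕ)) = 1
    simp
  rw [Finset.sum_congr rfl fun j _ => by rw [h0 j, map_one, mul_one]] at h
  rw [h]
  simp [eq_comm]

lemma norm_comb (n : ℕ) [NeZero n] (c : Fin n → ℂ) :
    ‖∑ k, c k • fourierP n k‖ ^ 2 = n * ∑ k, ‖c k‖ ^ 2 := by
  have key : (inner ℂ (∑ k, c k • fourierP n k) (∑ k, c k • fourierP n k) : ℂ)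
      = ((n * ∑ k, ‖c k‖ ^ 2 : ℝ) : ℂ) := by
    rw [sum_inner]
    have hterm : ∀ k : Fin n, (inner ℂ (c k • fourierP n k) (∑ l, c l • fourierP n l) : ℂ)
        = (n : ℂ) * ((‖c k‖ : ℝ) : ℂ) ^ 2 := by
      intro k
      rw [inner_smul_left, inner_sum]
      have : ∀ l : Fin n, (inner ℂ (fourierP n k) (c l • fourierP n l) : ℂ)
          = if k = l then c l * n else 0 := by
        intro l
        rw [inner_smul_right, fourierP_inner, mul_ite, mul_zero]
      rw [Finset.sum_congr rfl fun l _ => this l, Finset.sum_ite_eq, if_pos (Finset.mem_univ k)]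
      rw [← mul_assoc, mul_comm ((starRingEnd ℂ) (c k)) (c k), Complex.mul_conj]
      rw [Complex.normSq_eq_norm_sq]
      push_cast
      ring
    rw [Finset.sum_congr rfl fun k _ => hterm k, ← Finset.mul_sum]
    push_cast
    ring
  have h2 := norm_sq_eq_re_inner (𝕜 := ℂ) (E := EuclideanSpace ℂ (Fin n))
    (∑ k, c k • fourierP n k)
  rw [key, RCLike.re_to_complex, Complex.ofReal_re] at h2
  exact h2

theorem planar_flow_convergence (n m : ℕ) [NeZero n] (hn : 3 ≤ n) (hm : 1 ≤ m)
    (a : Fin n → ℂ) (X : ℝ → EuclideanSpace ℂ (Fin n))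
    (hflow : ∀ (t : ℝ) (j : Fin n),
      HasDerivAt (fun s => X s j)
        ((((-1 : ℂ) ^ (m + 1)) • (cycMC n ^ m).mulVec (X t)) j) t)
    (hinit : X 0 = ∑ k : Fin n, a k • fourierP n k) :
    (a 0 = (1 / n) * ∑ j : Fin n, X 0 j) ∧
    Tendsto X atTop (nhds (a 0 • fourierP n 0)) ∧
    (∀ t : ℝ, 0 ≤ t →
      ‖X t - a 0 • fourierP n 0‖ ≤ Real.exp (lam n m 1 * t) * ‖X 0 - a 0 • fourierP n 0‖) := by
  classical
  have hn0 : (n : ℂ) ≠ 0 := Nat.cast_ne_zero.2 (NeZero.ne n)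
  set A : Matrix (Fin n) (Fin n) ℂ := cycMC n ^ m with hA
  set c : ℂ := (-1) ^ (m + 1) with hc
  set F : (Fin n → ℂ) →L[ℂ] (Fin n → ℂ) :=
    c • LinearMap.toContinuousLinearMap (Matrix.mulVecLin A) with hFdef
  have hF : ∀ x : Fin n → ℂ, F x = c • A.mulVec x := by
    intro x
    simp [hFdef, Matrix.mulVecLin_apply]
  set XF : ℝ → Fin n → ℂ := fun t j => X t j with hXFdef
  set YF : ℝ → Fin n → ℂ :=
    fun t j => ∑ k : Fin n, ((Real.exp (lam n m k * t) : ℝ) : ℂ) * (a k * fourierP n k j)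
    with hYFdef
  -- eigenvalue action, componentwise
  have heig : ∀ (k : Fin n) (j : Fin n),
      c * (A.mulVec (fourierP n k) j) = ((lam n m k : ℝ) : ℂ) * fourierP n k j := by
    intro k j
    have h := congrFun (eigen_full n m hm k) j
    exact h
  -- the vector field applied to YF
  have hfield : ∀ t : ℝ, F (YF t) = fun j => ∑ k : Fin n,
      ((Real.exp (lam n m k * t) * (lam n m k * 1) : ℝ) : ℂ) * (a k * fourierP n k j) := by
    intro t
    funext j
    rw [hF]
    show c * (A.mulVec (YF t) j) = _
    have h1 : A.mulVec (YF t) j = ∑ i, A j i * YF t i := rfl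
    rw [h1]
    have h2 : ∀ i, YF t i = ∑ k : Fin n, ((Real.exp (lam n m k * t) : ℝ) : ℂ)
        * (a k * fourierP n k i) := fun i => rfl
    calc c * ∑ i, A j i * YF t i
        = ∑ k : Fin n, (((Real.exp (lam n m k * t) : ℝ) : ℂ) * a k)
            * (c * (A.mulVec (fourierP n k) j)) := by
          rw [Finset.mul_sum]
          rw [Finset.sum_congr rfl fun i _ => by
            rw [h2 i, Finset.mul_sum, Finset.mul_sum]]
          rw [Finset.sum_comm]
          refine Finset.sum_congr rfl fun k _ => ?_
          have h3 : A.mulVec (fourierP n k) j = ∑ i, A j i * fourierP n k i := rfl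
          rw [h3, Finset.mul_sum, Finset.mul_sum]
          refine Finset.sum_congr rfl fun i _ => ?_
          ring
      _ = _ := by
          refine Finset.sum_congr rfl fun k _ => ?_
          rw [heig k j]
          push_cast
          ring
  -- derivatives
  have hXF' : ∀ t : ℝ, HasDerivAt XF (F (XF t)) t := by
    intro t
    rw [hasDerivAt_pi]
    intro j
    have e : F (XF t) = ((-1 : ℂ) ^ (m + 1)) • (cycMC n ^ m).mulVec (X t) := hF (XF t)
    rw [e]
    exact hflow t j
  have hYF' : ∀ t : ℝ, HasDerivAt YF (F (YF t)) t := by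
    intro t
    rw [hfield t, hasDerivAt_pi]
    intro j
    show HasDerivAt (fun s => ∑ k : Fin n, ((Real.exp (lam n m k * s) : ℝ) : ℂ)
        * (a k * fourierP n k j)) _ t
    apply HasDerivAt.fun_sum
    intro k _
    exact (((hasDerivAt_id t).const_mul (lam n m (k : ℕ))).exp.ofReal_comp).mul_const
      (a k * fourierP n k j)
  -- uniqueness
  have huniq : ∀ t : ℝ, XF t = YF t := by
    intro t
    have h0 : XF 0 = YF 0 := by
      funext j
      have h1 : X 0 j = (∑ k : Fin n, a k • fourierP n k) j := by rw [hinit]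
      show X 0 j = ∑ k : Fin n, ((Real.exp (lam n m k * 0) : ℝ) : ℂ) * (a k * fourierP n k j)
      rw [h1, ESum_apply]
      refine Finset.sum_congr rfl fun k _ => ?_
      rw [Esmul_apply, mul_zero, Real.exp_zero]
      push_cast
      ring
    have hmem : t ∈ Set.Ioo (-(|t| + 1)) (|t| + 1) :=
      ⟨by nlinarith [abs_nonneg t, neg_abs_le t], by nlinarith [le_abs_self t]⟩
    have hmem0 : (0 : ℝ) ∈ Set.Ioo (-(|t| + 1)) (|t| + 1) :=
      ⟨by nlinarith [abs_nonneg t], by nlinarith [abs_nonneg t]⟩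
    exact ODE_solution_unique_of_mem_Ioo
      (v := fun _ x => F x) (s := fun _ => Set.univ) (K := ‖F‖₊)
      (fun _ _ => F.lipschitz.lipschitzOnWith)
      hmem0
      (fun t' _ => ⟨hXF' t', trivial⟩)
      (fun t' _ => ⟨hYF' t', trivial⟩)
      h0 hmem
  -- X as an explicit EuclideanSpace sum
  have hXsum : ∀ t : ℝ, X t = ∑ k : Fin n,
      (((Real.exp (lam n m k * t) : ℝ) : ℂ) * a k) • fourierP n k := by
    intro t
    ext j
    have h1 : X t j = YF t j := congrFun (huniq t) j
    rw [ESum_apply, h1]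
    refine Finset.sum_congr rfl fun k _ => ?_
    rw [Esmul_apply]
    ring
  -- part 1 : centre of mass
  have hpart1 : a 0 = (1 / n) * ∑ j : Fin n, X 0 j := by
    have hsum : ∑ j : Fin n, X 0 j = a 0 * n := by
      calc ∑ j : Fin n, X 0 j
          = ∑ j : Fin n, ∑ k : Fin n, a k * fourierP n k j := by
            refine Finset.sum_congr rfl fun j _ => ?_
            rw [hinit, ESum_apply]
            exact Finset.sum_congr rfl fun k _ => Esmul_apply (a k) (fourierP n k) j
        _ = ∑ k : Fin n, a k * ∑ j : Fin n, fourierP n k j := by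
            rw [Finset.sum_comm]
            exact Finset.sum_congr rfl fun k _ => (Finset.mul_sum _ _ _).symm
        _ = a 0 * n := by
            rw [Finset.sum_congr rfl fun k _ => by rw [sum_fourierP n k, mul_ite, mul_zero]]
            rw [Finset.sum_ite_eq' Finset.univ (0 : Fin n), if_pos (Finset.mem_univ _)]
    rw [hsum]
    field_simp
  -- decomposition of X t - a 0 • P 0
  set d : ℝ → Fin n → ℂ :=
    fun t k => if k = 0 then 0 else ((Real.exp (lam n m k * t) : ℝ) : ℂ) * a k with hd
  have hdecomp : ∀ t : ℝ, X t - a 0 • fourierP n 0 = ∑ k : Fin n, d t k • fourierP n k := by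
    intro t
    rw [hXsum t]
    have hsplit : ∀ k : Fin n, (((Real.exp (lam n m (k : ℕ) * t) : ℝ) : ℂ) * a k) • fourierP n k
        = (if k = 0 then a 0 • fourierP n 0 else 0) + d t k • fourierP n k := by
      intro k
      by_cases hk : k = 0
      · subst hk
        have h0 : lam n m ((0 : Fin n) : ℕ) = 0 := by
          rw [Fin.val_zero]
          exact lam_zero n m hm
        rw [h0, zero_mul, Real.exp_zero, Complex.ofReal_one, one_mul]
        simp [hd]
      · simp [hd, hk]
    rw [Finset.sum_congr rfl fun k _ => hsplit k, Finset.sum_add_distrib,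
      Finset.sum_ite_eq' Finset.univ (0 : Fin n), if_pos (Finset.mem_univ _)]
    abel
  have hnorm : ∀ t : ℝ, ‖X t - a 0 • fourierP n 0‖ ^ 2 = n * ∑ k : Fin n, ‖d t k‖ ^ 2 := by
    intro t
    rw [hdecomp t, norm_comb]
  -- part 3 : exponential decay
  have hpart3 : ∀ t : ℝ, 0 ≤ t →
      ‖X t - a 0 • fourierP n 0‖ ≤ Real.exp (lam n m 1 * t) * ‖X 0 - a 0 • fourierP n 0‖ := by
    intro t ht
    have hterm : ∀ k : Fin n, ‖d t k‖ ^ 2 ≤ Real.exp (lam n m 1 * t) ^ 2 * ‖d 0 k‖ ^ 2 := by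
      intro k
      by_cases hk : k = 0
      · subst hk
        have hz : ‖d t 0‖ ^ 2 = 0 := by simp [hd]
        rw [hz]
        exact mul_nonneg (sq_nonneg _) (sq_nonneg _)
      · have h1 : ∀ s : ℝ, ‖d s k‖ = Real.exp (lam n m k * s) * ‖a k‖ := by
          intro s
          simp only [hd]
          rw [if_neg hk, norm_mul, Complex.norm_real, Real.norm_eq_abs,
            abs_of_pos (Real.exp_pos _)]
        have h2 : ‖d 0 k‖ = ‖a k‖ := by rw [h1 0, mul_zero, Real.exp_zero, one_mul]
        rw [h1 t, h2, ← mul_pow]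
        have he : Real.exp (lam n m (k : ℕ) * t) ≤ Real.exp (lam n m 1 * t) :=
          Real.exp_le_exp.2 (mul_le_mul_of_nonneg_right (lam_le n m hn hm k hk) ht)
        exact pow_le_pow_left₀ (mul_nonneg (Real.exp_pos _).le (norm_nonneg (a k)))
          (mul_le_mul_of_nonneg_right he (norm_nonneg (a k))) 2
    have hsq : ‖X t - a 0 • fourierP n 0‖ ^ 2
        ≤ (Real.exp (lam n m 1 * t) * ‖X 0 - a 0 • fourierP n 0‖) ^ 2 := by
      rw [hnorm t, mul_pow, hnorm 0]
      calc (n : ℝ) * ∑ k : Fin n, ‖d t k‖ ^ 2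
          ≤ (n : ℝ) * ∑ k : Fin n, Real.exp (lam n m 1 * t) ^ 2 * ‖d 0 k‖ ^ 2 :=
            mul_le_mul_of_nonneg_left (Finset.sum_le_sum fun k _ => hterm k)
              (Nat.cast_nonneg n)
        _ = Real.exp (lam n m 1 * t) ^ 2 * ((n : ℝ) * ∑ k : Fin n, ‖d 0 k‖ ^ 2) := by
            rw [← Finset.mul_sum]
            ring
    have h1 := Real.sqrt_le_sqrt hsq
    rwa [Real.sqrt_sq (norm_nonneg _), Real.sqrt_sq (by positivity)] at h1
  -- part 2 : convergence
  have hpart2 : Tendsto X atTop (nhds (a 0 • fourierP n 0)) := by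
    have hneg : lam n m 1 < 0 := lam_neg n m hn hm
    have h1 : Tendsto (fun t : ℝ => lam n m 1 * t) atTop atBot :=
      (tendsto_const_mul_atBot_of_neg hneg).2 tendsto_id
    have h2 : Tendsto (fun t : ℝ => Real.exp (lam n m 1 * t)) atTop (nhds 0) :=
      Real.tendsto_exp_atBot.comp h1
    have hC : Tendsto (fun t : ℝ => Real.exp (lam n m 1 * t) * ‖X 0 - a 0 • fourierP n 0‖)
        atTop (nhds 0) := by
      simpa using h2.mul_const ‖X 0 - a 0 • fourierP n 0‖
    have h3 : Tendsto (fun t : ℝ => X t - a 0 • fourierP n 0) atTop (nhds 0) := by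
      have hev : ∀ᶠ t : ℝ in atTop, ‖X t - a 0 • fourierP n 0‖
          ≤ Real.exp (lam n m 1 * t) * ‖X 0 - a 0 • fourierP n 0‖ :=
        (eventually_ge_atTop (0 : ℝ)).mono fun t ht => hpart3 t ht
      exact squeeze_zero_norm' hev hC
    have h4 := h3.add_const (a 0 • fourierP n 0)
    simpa using h4
  exact ⟨hpart1, hpart2, hpart3⟩
end

section
/- Let n ≥ 3, m ≥ 1, M = circ(−2,1,0,…,0,1). Suppose X(t) = X^0 + h(t)·(1,…,1)^T solves dX/dt = (−1)^{m+1}M^m X in ℂ^n for all t, where h : ℝ → ℂ is differentiable with h(0) = 0. Then h ≡ 0 and X^0 is a constant vector; i.e., there are no nontrivial translating self-similar solutions. -/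
open Complex Real

open Matrix

lemma cycMC_herm (n : ℕ) [NeZero n] : (cycMC n).IsHermitian := by
  ext i j
  simp only [conjTranspose_apply, cycMC, Matrix.of_apply, star_add,
    apply_ite (star : ℂ → ℂ), star_one, star_zero, star_neg, star_ofNat]
  rw [show ((if j = i then (-2:ℂ) else 0) = if i = j then (-2:ℂ) else 0) by simp [eq_comm]]
  ring

open Fin.CommRing in
lemma cycMC_mulVec (n : ℕ) [NeZero n] (x : Fin n → ℂ) (i : Fin n) :
    (cycMC n).mulVec x i = -2 * x i + x (i - 1) + x (i + 1) := by
  simp only [mulVec, dotProduct, cycMC, Matrix.of_apply, add_mul]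
  rw [Finset.sum_add_distrib, Finset.sum_add_distrib]
  congr 1
  congr 1
  · simp [ite_mul]
  · have key : ∀ j : Fin n, (i = j + 1) = (j = i - 1) := by
      intro j; rw [eq_iff_iff]
      constructor
      · intro h; rw [h]; ring
      · intro h; rw [h]; ring
    simp only [key, ite_mul, one_mul, zero_mul]
    simp
  · have key : ∀ j : Fin n, (j = i + 1) = (j = i + 1) := fun _ => rfl
    simp only [ite_mul, one_mul, zero_mul]
    simp

lemma cycMC_mulVec_const (n : ℕ) [NeZero n] (c : ℂ) :
    (cycMC n).mulVec (fun _ => c) = 0 := by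
  funext i
  rw [cycMC_mulVec]
  simp; ring

open Fin.CommRing in
lemma cycMC_vecMul_one (n : ℕ) [NeZero n] :
    Matrix.vecMul (fun _ => (1:ℂ)) (cycMC n) = 0 := by
  funext j
  simp only [vecMul, dotProduct, cycMC, Matrix.of_apply, one_mul, Pi.zero_apply]
  rw [Finset.sum_add_distrib, Finset.sum_add_distrib]
  have h1 : ∑ i : Fin n, (if i = j then (-2:ℂ) else 0) = -2 := by simp
  have h2 : ∑ i : Fin n, (if i = j + 1 then (1:ℂ) else 0) = 1 := by simp
  have h3 : ∑ i : Fin n, (if j = i + 1 then (1:ℂ) else 0) = 1 := by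
    have key : ∀ i : Fin n, (j = i + 1) = (i = j - 1) := by
      intro i; rw [eq_iff_iff]
      constructor
      · intro h; rw [h]; ring
      · intro h; rw [h]; ring
    simp only [key]; simp
  rw [h1, h2, h3]; ring

open Fin.CommRing in
lemma fin_const_of_step {α : Type*} (n : ℕ) [NeZero n] (f : Fin n → α)
    (hf : ∀ i : Fin n, f (i + 1) = f i) : ∀ i : Fin n, f i = f 0 := by
  have key : ∀ k : ℕ, f (k : Fin n) = f 0 := by
    intro k
    induction k with
    | zero => simp
    | succ k ih => rw [show ((k+1 : ℕ) : Fin n) = (k : Fin n) + 1 by push_cast; ring, hf, ih]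
  intro i
  have := key i.val
  rwa [Fin.cast_val_eq_self] at this

lemma cycMC_ker (n : ℕ) [NeZero n] (hn : 3 ≤ n) (x : Fin n → ℂ)
    (hx : (cycMC n).mulVec x = 0) : ∀ j, x j = x 0 := by
  set d : Fin n → ℂ := fun i => x (i + 1) - x i with hd
  have hstep : ∀ i : Fin n, d (i + 1) = d i := by
    intro i
    have := congrFun hx (i + 1)
    rw [cycMC_mulVec] at this
    simp only [Pi.zero_apply, add_sub_cancel_right] at this
    simp only [hd]
    linear_combination this
  have hdc : ∀ i : Fin n, d i = d 0 := fin_const_of_step n d hstep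
  have hsum : ∑ i : Fin n, d i = 0 := by
    simp only [hd, Finset.sum_sub_distrib]
    rw [Fintype.sum_equiv (Equiv.addRight (1 : Fin n)) (fun i => x (i + 1)) x (fun i => rfl)]
    ring
  have hn0 : (n : ℂ) ≠ 0 := by
    simp only [ne_eq, Nat.cast_eq_zero]; omega
  have hd0 : d 0 = 0 := by
    rw [Finset.sum_congr rfl (fun i _ => hdc i), Finset.sum_const] at hsum
    simp only [Finset.card_univ, Fintype.card_fin, nsmul_eq_mul] at hsum
    exact (mul_eq_zero.mp hsum).resolve_left hn0
  have hxstep : ∀ i : Fin n, x (i + 1) = x i := by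
    intro i
    have := hdc i
    rw [hd0] at this
    simpa [hd, sub_eq_zero] using this
  exact fin_const_of_step n x hxstep

lemma herm_sq_ker {n : ℕ} (B : Matrix (Fin n) (Fin n) ℂ) (hB : B.IsHermitian)
    (x : Fin n → ℂ) (hx : B.mulVec (B.mulVec x) = 0) : B.mulVec x = 0 := by
  have key : star (B.mulVec x) ⬝ᵥ (B.mulVec x) = 0 := by
    rw [star_mulVec, hB.eq, ← Matrix.dotProduct_mulVec, hx, dotProduct_zero]
  have key2 : ((∑ i, Complex.normSq (B.mulVec x i) : ℝ) : ℂ) = 0 := by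
    rw [← key]
    simp only [dotProduct, Pi.star_apply, Complex.star_def]
    push_cast
    exact Finset.sum_congr rfl fun i _ => by rw [mul_comm, Complex.mul_conj]
  have key3 : (∑ i, Complex.normSq (B.mulVec x i) : ℝ) = 0 := by exact_mod_cast key2
  funext i
  have := (Finset.sum_eq_zero_iff_of_nonneg (fun i _ => Complex.normSq_nonneg _)).mp key3 i (Finset.mem_univ i)
  simpa [Complex.normSq_eq_zero] using this

lemma cycMC_pow_ker (n : ℕ) [NeZero n] : ∀ m : ℕ, ∀ x : Fin n → ℂ,
    ((cycMC n) ^ m).mulVec x = 0 → (cycMC n).mulVec x = 0 := by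
  intro m
  induction m using Nat.strong_induction_on with
  | _ m ih =>
    intro x hx
    match m, hx with
    | 0, hx => simp only [pow_zero, Matrix.one_mulVec] at hx; rw [hx]; simp
    | 1, hx => simpa using hx
    | (k+2), hx =>
      have h2 : ((cycMC n) ^ (k+1)).mulVec (((cycMC n) ^ (k+1)).mulVec x) = 0 := by
        rw [Matrix.mulVec_mulVec, ← pow_add]
        have : (k+1) + (k+1) = k + (k + 2) := by ring
        rw [this, pow_add, ← Matrix.mulVec_mulVec, hx, Matrix.mulVec_zero]
      have hB : ((cycMC n) ^ (k+1)).IsHermitian := (cycMC_herm n).pow (k+1)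
      have := herm_sq_ker _ hB x h2
      exact ih (k+1) (by omega) x this

theorem no_translating_selfsimilar_solutions (n m : ℕ) [NeZero n] (hn : 3 ≤ n) (hm : 1 ≤ m)
    (X0 : Fin n → ℂ) (h : ℝ → ℂ) (hh : Differentiable ℝ h) (hh0 : h 0 = 0)
    (hflow : ∀ (t : ℝ) (j : Fin n),
      HasDerivAt (fun s => X0 j + h s)
        ((((-1 : ℂ) ^ (m + 1)) • (cycMC n ^ m).mulVec (fun i => X0 i + h t)) j) t) :
    (∀ t : ℝ, h t = 0) ∧ ∃ c : ℂ, ∀ j : Fin n, X0 j = c := by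

  set A := cycMC n with hA
  obtain ⟨k, rfl⟩ : ∃ k, m = k + 1 := ⟨m - 1, by omega⟩
  -- M^m kills constants
  have hkill : ∀ z : ℂ, (A ^ (k+1)).mulVec (fun _ => z) = 0 := by
    intro z
    rw [pow_succ, ← Matrix.mulVec_mulVec, cycMC_mulVec_const, Matrix.mulVec_zero]
  have hsimp : ∀ t : ℝ, (A ^ (k+1)).mulVec (fun i => X0 i + h t) = (A ^ (k+1)).mulVec X0 := by
    intro t
    have : (fun i => X0 i + h t) = X0 + (fun _ => h t) := rfl
    rw [this, Matrix.mulVec_add, hkill, add_zero]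
  set c : Fin n → ℂ := fun j => (-1 : ℂ) ^ (k + 2) * ((A ^ (k+1)).mulVec X0 j) with hc
  have hderiv : ∀ (t : ℝ) (j : Fin n), deriv h t = c j := by
    intro t j
    have H1 : HasDerivAt (fun s => X0 j + h s) (deriv h t) t :=
      HasDerivAt.const_add (X0 j) (hh t).hasDerivAt
    have H2 := hflow t j
    rw [hsimp t] at H2
    have := H1.unique H2
    simpa [hc, Pi.smul_apply, smul_eq_mul] using this
  have hceq : ∀ j : Fin n, c j = c 0 := fun j => (hderiv 0 j).symm.trans (hderiv 0 0)
  -- sum of (A^m X0) is zero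
  have hones : Matrix.vecMul (fun _ => (1:ℂ)) (A ^ (k+1)) = 0 := by
    rw [pow_succ', ← Matrix.vecMul_vecMul, cycMC_vecMul_one, Matrix.zero_vecMul]
  have hsum : ∑ j : Fin n, (A ^ (k+1)).mulVec X0 j = 0 := by
    have : (fun _ => (1:ℂ)) ⬝ᵥ (A ^ (k+1)).mulVec X0 = 0 := by
      rw [Matrix.dotProduct_mulVec, hones, zero_dotProduct]
    simpa [dotProduct] using this
  have hcsum : ∑ j : Fin n, c j = 0 := by
    simp only [hc, ← Finset.mul_sum, hsum, mul_zero]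
  have hn0 : (n : ℂ) ≠ 0 := by simp only [ne_eq, Nat.cast_eq_zero]; omega
  have hc0 : c 0 = 0 := by
    rw [Finset.sum_congr rfl (fun j _ => hceq j), Finset.sum_const] at hcsum
    simp only [Finset.card_univ, Fintype.card_fin, nsmul_eq_mul] at hcsum
    exact (mul_eq_zero.mp hcsum).resolve_left hn0
  have hAX0 : (A ^ (k+1)).mulVec X0 = 0 := by
    funext j
    have : c j = 0 := (hceq j).trans hc0
    rw [hc] at this
    have hne : ((-1 : ℂ) ^ (k + 2)) ≠ 0 := by
      apply pow_ne_zero; norm_num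
    exact (mul_eq_zero.mp this).resolve_left hne
  have hd0 : ∀ t : ℝ, deriv h t = 0 := by
    intro t
    rw [hderiv t 0, hc0]
  have hconst : ∀ t : ℝ, h t = 0 := by
    intro t
    have := is_const_of_deriv_eq_zero hh hd0 t 0
    rwa [hh0] at this
  refine ⟨hconst, X0 0, ?_⟩
  exact cycMC_ker n hn X0 (cycMC_pow_ker n (k+1) X0 hAX0)
end

section
/- Let n ≥ 3, m ≥ 1, M = circ(−2,1,0,…,0,1), Y ∈ ℂ^n fixed, and let X(t) solve dX/dt = (−1)^{m+1}M^m(X − Y) with X(0) = X^0. Then as t → ∞, X(t) converges exponentially to Y + c·(1,…,1)^T, where c = (1/n)∑_{j=0}^{n−1}(X^0_j − Y_j) is the centre of mass of the difference polygon X^0 − Y. -/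
open Complex Real Filter

namespace YauAux

variable {n : ℕ} [NeZero n]

lemma pow_mod {η : ℂ} (hη : η ^ n = 1) (x : ℕ) : η ^ (x % n) = η ^ x := by
  conv_rhs => rw [← Nat.mod_add_div x n]
  rw [pow_add, pow_mul, hη, one_pow, mul_one]

lemma pow_val_add {η : ℂ} (hη : η ^ n = 1) (a : Fin n) :
    η ^ ((a + 1 : Fin n) : ℕ) = η * η ^ (a : ℕ) := by
  have h : ((a + 1 : Fin n) : ℕ) = ((a : ℕ) + 1) % n := by
    simp [Fin.add_def, Fin.val_one', Nat.add_mod]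
  rw [h, pow_mod hη, pow_succ, mul_comm]

lemma eig {η : ℂ} (hη : η ^ n = 1) (hη0 : η ≠ 0) (z : Fin n → ℂ) :
    ∑ i : Fin n, η ^ (i : ℕ) * (cycMC n).mulVec z i
      = (η + η⁻¹ - 2) * ∑ i : Fin n, η ^ (i : ℕ) * z i := by
  have hsub : ∀ j : Fin n, η ^ ((j - 1 : Fin n) : ℕ) = η⁻¹ * η ^ (j : ℕ) := by
    intro j
    have h1 : η * η ^ ((j - 1 : Fin n) : ℕ) = η ^ (j : ℕ) := by
      rw [← pow_val_add hη (j - 1), sub_add_cancel]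
    field_simp [← h1]
    linear_combination h1
  have key : ∀ j : Fin n, ∑ i : Fin n, η ^ (i : ℕ) * cycMC n i j
      = (η + η⁻¹ - 2) * η ^ (j : ℕ) := by
    intro j
    have e1 : ∑ i : Fin n, η ^ (i : ℕ) * (if i = j then (-2 : ℂ) else 0)
        = -2 * η ^ (j : ℕ) := by
      simp [mul_ite, mul_comm]
    have e2 : ∑ i : Fin n, η ^ (i : ℕ) * (if i = j + 1 then (1 : ℂ) else 0)
        = η * η ^ (j : ℕ) := by
      simp [mul_ite, pow_val_add hη j]
    have e3 : ∑ i : Fin n, η ^ (i : ℕ) * (if j = i + 1 then (1 : ℂ) else 0)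
        = η⁻¹ * η ^ (j : ℕ) := by
      rw [Finset.sum_eq_single (j - 1)]
      · simp [sub_add_cancel, hsub j]
      · intro i _ hi
        have : j ≠ i + 1 := by
          intro h; apply hi; rw [h]; exact (add_sub_cancel_right i 1).symm
        simp [this]
      · intro h; exact absurd (Finset.mem_univ _) h
    calc ∑ i : Fin n, η ^ (i : ℕ) * cycMC n i j
        = ∑ i : Fin n, (η ^ (i : ℕ) * (if i = j then (-2 : ℂ) else 0)
            + η ^ (i : ℕ) * (if i = j + 1 then (1 : ℂ) else 0)
            + η ^ (i : ℕ) * (if j = i + 1 then (1 : ℂ) else 0)) := by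
          apply Finset.sum_congr rfl; intro i _; simp only [cycMC, Matrix.of_apply, mul_add]
      _ = -2 * η ^ (j : ℕ) + η * η ^ (j : ℕ) + η⁻¹ * η ^ (j : ℕ) := by
          rw [Finset.sum_add_distrib, Finset.sum_add_distrib, e1, e2, e3]
      _ = (η + η⁻¹ - 2) * η ^ (j : ℕ) := by ring
  calc ∑ i : Fin n, η ^ (i : ℕ) * (cycMC n).mulVec z i
      = ∑ i : Fin n, ∑ j : Fin n, η ^ (i : ℕ) * (cycMC n i j * z j) := by
        simp [Matrix.mulVec, dotProduct, Finset.mul_sum]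
    _ = ∑ j : Fin n, (∑ i : Fin n, η ^ (i : ℕ) * cycMC n i j) * z j := by
        rw [Finset.sum_comm]
        apply Finset.sum_congr rfl; intro j _
        rw [Finset.sum_mul]
        apply Finset.sum_congr rfl; intro i _; ring
    _ = ∑ j : Fin n, ((η + η⁻¹ - 2) * η ^ (j : ℕ)) * z j := by
        apply Finset.sum_congr rfl; intro j _; rw [key j]
    _ = (η + η⁻¹ - 2) * ∑ i : Fin n, η ^ (i : ℕ) * z i := by
        rw [Finset.mul_sum]; apply Finset.sum_congr rfl; intro j _; ring

lemma eig_pow {η : ℂ} (hη : η ^ n = 1) (hη0 : η ≠ 0) (m : ℕ) (z : Fin n → ℂ) :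
    ∑ i : Fin n, η ^ (i : ℕ) * (cycMC n ^ m).mulVec z i
      = (η + η⁻¹ - 2) ^ m * ∑ i : Fin n, η ^ (i : ℕ) * z i := by
  induction m with
  | zero => simp [Matrix.one_mulVec]
  | succ m ih =>
      rw [pow_succ', ← Matrix.mulVec_mulVec, eig hη hη0, ih, pow_succ]
      ring

lemma ode_exp {μ : ℂ} {g : ℝ → ℂ} (h : ∀ t, HasDerivAt g (μ * g t) t) (t : ℝ) :
    g t = Complex.exp (μ * t) * g 0 := by
  have key : ∀ s : ℝ, HasDerivAt (fun u : ℝ => Complex.exp (-μ * u) * g u) 0 s := by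
    intro s
    have hE : HasDerivAt (fun u : ℝ => Complex.exp (-μ * u)) (-μ * Complex.exp (-μ * s)) s := by
      have h1 : HasDerivAt (fun z : ℂ => Complex.exp (-μ * z))
          (-μ * Complex.exp (-μ * s)) (s : ℂ) := by
        simpa [Function.comp_def, mul_comm] using
          (Complex.hasDerivAt_exp (-μ * s)).comp (s : ℂ)
            ((hasDerivAt_id (s : ℂ)).const_mul (-μ))
      exact h1.comp_ofReal
    have h2 : HasDerivAt (fun u : ℝ => Complex.exp (-μ * u) * g u) _ s := hE.mul (h s)
    convert h2 using 1
    ring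
  have hconst : Complex.exp (-μ * t) * g t = Complex.exp (-μ * 0) * g 0 := by
    exact is_const_of_deriv_eq_zero (fun x => (key x).differentiableAt)
      (fun x => (key x).deriv) t 0
  norm_num at hconst
  have := congrArg (fun w => Complex.exp (μ * t) * w) hconst
  simpa [← Complex.exp_add, mul_comm, mul_left_comm, mul_assoc] using this

end YauAux

set_option maxHeartbeats 1000000 in
theorem yau_difference_flow_convergence (n m : ℕ) [NeZero n] (hn : 3 ≤ n) (hm : 1 ≤ m)
    (Y X0 : Fin n → ℂ) (X : ℝ → (Fin n → ℂ))
    (hflow : ∀ (t : ℝ) (j : Fin n),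
      HasDerivAt (fun s => X s j)
        ((((-1 : ℂ) ^ (m + 1)) • (cycMC n ^ m).mulVec (X t - Y)) j) t)
    (hinit : X 0 = X0) :
    Tendsto X atTop
        (nhds (Y + fun _ => (n : ℂ)⁻¹ * ∑ j : Fin n, (X0 j - Y j))) ∧
    ∃ C > (0 : ℝ), ∃ δ > (0 : ℝ), ∀ t : ℝ, 0 ≤ t →
      ‖X t - (Y + fun _ => (n : ℂ)⁻¹ * ∑ j : Fin n, (X0 j - Y j))‖ ≤ C * Real.exp (-δ * t) := by
  have hnne : n ≠ 0 := NeZero.ne n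
  have hn0 : (n : ℂ) ≠ 0 := Nat.cast_ne_zero.mpr hnne
  have hnR : (0 : ℝ) < n := by exact_mod_cast Nat.pos_of_ne_zero hnne
  set c : ℂ := (n : ℂ)⁻¹ * ∑ j : Fin n, (X0 j - Y j) with hc
  set L : Fin n → ℂ := Y + fun _ => c with hLdef
  set ζ : ℂ := Complex.exp (2 * π * I / n) with hζdef
  have hζ : IsPrimitiveRoot ζ n := Complex.isPrimitiveRoot_exp n hnne
  have hζn : ζ ^ n = 1 := hζ.pow_eq_one
  have hζ0 : ζ ≠ 0 := Complex.exp_ne_zero _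
  set ξ : ℂ := ζ⁻¹ with hξdef
  have hξn : ξ ^ n = 1 := by rw [hξdef, inv_pow, hζn, inv_one]
  set η : Fin n → ℂ := fun k => ζ ^ (k : ℕ) with hηdef
  have hηn : ∀ k, η k ^ n = 1 := by
    intro k; rw [hηdef]; simp only
    rw [← pow_mul, mul_comm, pow_mul, hζn, one_pow]
  have hη0 : ∀ k, η k ≠ 0 := fun k => pow_ne_zero _ hζ0
  set θ : Fin n → ℝ := fun k => 2 * π * k / n with hθdef
  have hηexp : ∀ k, η k = Complex.exp ((θ k : ℂ) * I) := by
    intro k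
    rw [hηdef]; simp only
    rw [hζdef, ← Complex.exp_nat_mul]
    congr 1
    rw [hθdef]; push_cast; ring
  set lam : Fin n → ℂ := fun k => η k + (η k)⁻¹ - 2 with hlamdef
  have hlam : ∀ k, lam k = ((2 * Real.cos (θ k) - 2 : ℝ) : ℂ) := by
    intro k
    have h1 : (η k)⁻¹ = Complex.exp (-(θ k : ℂ) * I) := by
      rw [hηexp k, ← Complex.exp_neg]; ring_nf
    have h2 : η k + (η k)⁻¹ = 2 * Complex.cos (θ k : ℂ) := by
      rw [Complex.two_cos, ← hηexp k, ← h1]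
    rw [hlamdef]; simp only
    rw [h2, ← Complex.ofReal_cos]
    push_cast; ring
  set r : Fin n → ℝ := fun k => (2 - 2 * Real.cos (θ k)) ^ m with hrdef
  set mu : Fin n → ℂ := fun k => (-1 : ℂ) ^ (m + 1) * lam k ^ m with hmudef
  have hmu : ∀ k, mu k = ((-(r k) : ℝ) : ℂ) := by
    intro k
    have hneg : ((-1 : ℂ)) ^ (m + 1) * ((-1 : ℂ)) ^ m = -1 := by
      rw [← pow_add]
      exact Odd.neg_one_pow ⟨m, by ring⟩
    rw [hmudef]; simp only
    rw [hlam k, hrdef]; simp only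
    have : ((2 * Real.cos (θ k) - 2 : ℝ) : ℂ) = (-1) * ((2 - 2 * Real.cos (θ k) : ℝ) : ℂ) := by
      push_cast; ring
    rw [this, mul_pow, ← mul_assoc, hneg]
    push_cast; ring
  set G : Fin n → ℝ → ℂ := fun k t => ∑ i : Fin n, η k ^ (i : ℕ) * (X t i - Y i) with hGdef
  -- the Fourier modes satisfy scalar ODEs
  have hG' : ∀ k t, HasDerivAt (G k) (mu k * G k t) t := by
    intro k t
    have hterm : ∀ i : Fin n, HasDerivAt (fun s => η k ^ (i : ℕ) * (X s i - Y i))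
        (η k ^ (i : ℕ) * ((((-1 : ℂ) ^ (m + 1)) • (cycMC n ^ m).mulVec (X t - Y)) i)) t :=
      fun i => ((hflow t i).sub_const (Y i)).const_mul _
    have hsum := HasDerivAt.sum (fun i (_ : i ∈ Finset.univ) => hterm i)
    have hval : ∑ i : Fin n, η k ^ (i : ℕ) *
        ((((-1 : ℂ) ^ (m + 1)) • (cycMC n ^ m).mulVec (X t - Y)) i) = mu k * G k t := by
      calc ∑ i : Fin n, η k ^ (i : ℕ) *
            ((((-1 : ℂ) ^ (m + 1)) • (cycMC n ^ m).mulVec (X t - Y)) i)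
          = (-1 : ℂ) ^ (m + 1) * ∑ i : Fin n, η k ^ (i : ℕ) *
              ((cycMC n ^ m).mulVec (X t - Y)) i := by
            rw [Finset.mul_sum]
            refine Finset.sum_congr rfl fun i _ => ?_
            simp only [Pi.smul_apply, smul_eq_mul]; ring
        _ = (-1 : ℂ) ^ (m + 1) * (lam k ^ m * ∑ i : Fin n, η k ^ (i : ℕ) * (X t - Y) i) := by
            rw [YauAux.eig_pow (hηn k) (hη0 k) m (X t - Y)]
        _ = mu k * G k t := by
            rw [hmudef, hGdef]; simp only [Pi.sub_apply]; ring
    have hsum' : HasDerivAt (G k)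
        (∑ i : Fin n, η k ^ (i : ℕ) * ((((-1 : ℂ) ^ (m + 1)) • (cycMC n ^ m).mulVec (X t - Y)) i)) t := by
      rw [Finset.sum_fn] at hsum; exact hsum
    exact hval ▸ hsum'
  have hGsol : ∀ k t, G k t = Complex.exp (mu k * t) * G k 0 :=
    fun k => YauAux.ode_exp (hG' k)
  -- the zero mode
  have hη0eq : η 0 = 1 := by rw [hηdef]; simp
  have hmu0 : mu 0 = 0 := by
    rw [hmudef]; simp only
    have : lam 0 = 0 := by rw [hlamdef]; simp only [hη0eq, inv_one]; norm_num
    rw [this, zero_pow (by omega : m ≠ 0), mul_zero]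
  have hG0 : ∀ t, G 0 t = (n : ℂ) * c := by
    intro t
    have h1 : G 0 t = Complex.exp (mu 0 * t) * G 0 0 := hGsol 0 t
    rw [hmu0, zero_mul, Complex.exp_zero, one_mul] at h1
    rw [h1, hGdef]; simp only [hη0eq, one_pow, one_mul, hinit]
    rw [hc, ← mul_assoc, mul_inv_cancel₀ hn0, one_mul]
  -- orthogonality
  have horth : ∀ i j : Fin n, ∑ k : Fin n, ((ζ ^ (i : ℕ) * ξ ^ (j : ℕ)) ^ (k : ℕ)) =
      if i = j then (n : ℂ) else 0 := by
    intro i j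
    set w : ℂ := ζ ^ (i : ℕ) * ξ ^ (j : ℕ) with hwdef
    have hsum : ∑ k : Fin n, w ^ (k : ℕ) = ∑ k ∈ Finset.range n, w ^ k :=
      Fin.sum_univ_eq_sum_range (fun x => w ^ x) n
    by_cases hij : i = j
    · subst hij
      have hw1 : w = 1 := by
        rw [hwdef, hξdef, inv_pow, mul_inv_cancel₀ (pow_ne_zero _ hζ0)]
      rw [if_pos rfl, hsum, hw1]
      simp
    · have hwne : w ≠ 1 := by
        intro hw1
        apply hij
        have : ζ ^ (i : ℕ) = ζ ^ (j : ℕ) := by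
          have := hw1
          rw [hwdef, hξdef, inv_pow] at this
          field_simp at this
          exact this
        exact Fin.ext (hζ.pow_inj i.isLt j.isLt this)
      have hwn : w ^ n = 1 := by
        rw [hwdef, mul_pow, pow_right_comm, hζn, one_pow, pow_right_comm, hξn, one_pow, one_mul]
      rw [hsum, geom_sum_eq hwne, hwn, sub_self, zero_div, if_neg hij]
  -- Fourier inversion
  have hinv : ∀ t (j : Fin n), ∑ k : Fin n, (ξ ^ (j : ℕ)) ^ (k : ℕ) * G k t =
      (n : ℂ) * (X t j - Y j) := by
    intro t j
    calc ∑ k : Fin n, (ξ ^ (j : ℕ)) ^ (k : ℕ) * G k t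
        = ∑ k : Fin n, ∑ i : Fin n, ((ζ ^ (i : ℕ) * ξ ^ (j : ℕ)) ^ (k : ℕ)) * (X t i - Y i) := by
          refine Finset.sum_congr rfl fun k _ => ?_
          rw [hGdef]; simp only
          rw [Finset.mul_sum]
          refine Finset.sum_congr rfl fun i _ => ?_
          rw [hηdef]; simp only
          rw [mul_pow, pow_right_comm ζ]
          ring
      _ = ∑ i : Fin n, (∑ k : Fin n, ((ζ ^ (i : ℕ) * ξ ^ (j : ℕ)) ^ (k : ℕ))) * (X t i - Y i) := by
          rw [Finset.sum_comm]
          refine Finset.sum_congr rfl fun i _ => ?_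
          rw [Finset.sum_mul]
      _ = (n : ℂ) * (X t j - Y j) := by
          rw [Finset.sum_congr rfl fun i (_ : i ∈ Finset.univ) => by rw [horth i j]]
          simp
  -- the closed-form solution off the zero mode
  set S : Finset (Fin n) := Finset.univ.erase 0 with hSdef
  have hfinal : ∀ (t : ℝ) (j : Fin n), X t j - L j =
      (n : ℂ)⁻¹ * ∑ k ∈ S, (ξ ^ (j : ℕ)) ^ (k : ℕ) * (Complex.exp (mu k * t) * G k 0) := by
    intro t j
    have hsplit : (ξ ^ (j : ℕ)) ^ ((0 : Fin n) : ℕ) * G 0 t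
        + ∑ k ∈ S, (ξ ^ (j : ℕ)) ^ (k : ℕ) * G k t
        = ∑ k : Fin n, (ξ ^ (j : ℕ)) ^ (k : ℕ) * G k t :=
      Finset.add_sum_erase Finset.univ (fun k : Fin n => (ξ ^ (j : ℕ)) ^ (k : ℕ) * G k t)
        (Finset.mem_univ 0)
    have h0term : (ξ ^ (j : ℕ)) ^ ((0 : Fin n) : ℕ) * G 0 t = (n : ℂ) * c := by
      simp [hG0 t]
    have he : (n : ℂ) * (X t j - L j) = ∑ k ∈ S, (ξ ^ (j : ℕ)) ^ (k : ℕ) * G k t := by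
      have : (n : ℂ) * (X t j - L j) = (n : ℂ) * (X t j - Y j) - (n : ℂ) * c := by
        rw [hLdef]; simp only [Pi.add_apply]; ring
      rw [this, ← hinv t j, ← hsplit, h0term]; ring
    have := congrArg (fun w => (n : ℂ)⁻¹ * w) he
    rw [← mul_assoc, inv_mul_cancel₀ hn0, one_mul] at this
    rw [this]
    congr 1
    exact Finset.sum_congr rfl fun k _ => by rw [hGsol k t]
  -- spectral gap
  have h1mem : (1 : Fin n) ∈ S := by
    rw [hSdef, Finset.mem_erase]
    refine ⟨?_, Finset.mem_univ _⟩
    simp [Fin.ext_iff, Fin.val_one']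
    omega
  have hSne : S.Nonempty := ⟨1, h1mem⟩
  set δ : ℝ := S.inf' hSne r with hδdef
  have hrpos : ∀ k ∈ S, 0 < r k := by
    intro k hk
    have hkne : k ≠ 0 := (Finset.mem_erase.mp hk).1
    have hkval : 1 ≤ (k : ℕ) := by
      have : (k : ℕ) ≠ 0 := fun h => hkne (Fin.ext (by rw [h, Fin.val_zero]))
      omega
    have hklt : (k : ℕ) < n := k.isLt
    have hθpos : 0 < θ k := by
      rw [hθdef]; simp only
      have : (0:ℝ) < (k : ℕ) := by exact_mod_cast hkval
      positivity
    have hθlt : θ k < 2 * π := by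
      rw [hθdef]; simp only
      rw [div_lt_iff₀ hnR]
      have hkR : ((k : ℕ) : ℝ) < (n : ℝ) := by exact_mod_cast hklt
      have : 0 < π := Real.pi_pos
      nlinarith
    have hcos : Real.cos (θ k) < 1 := by
      rcases lt_or_eq_of_le (Real.cos_le_one (θ k)) with h | h
      · exact h
      · exfalso
        have := (Real.cos_eq_one_iff_of_lt_of_lt (by linarith) hθlt).mp h
        linarith
    rw [hrdef]; simp only
    have h2 : 0 < 2 - 2 * Real.cos (θ k) := by linarith
    exact pow_pos h2 m
  have hδpos : 0 < δ := by
    rw [hδdef, Finset.lt_inf'_iff]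
    exact hrpos
  have hδle : ∀ k ∈ S, δ ≤ r k := fun k hk => Finset.inf'_le _ hk
  -- norm bounds
  have hζabs : ‖ζ‖ = 1 := by
    rw [hζdef]
    have harg : 2 * π * I / (n : ℂ) = ((2 * π / n : ℝ) : ℂ) * I := by push_cast; ring
    rw [harg, Complex.norm_exp]
    simp
  have hξabs : ‖ξ‖ = 1 := by rw [hξdef, norm_inv, hζabs, inv_one]
  have hexpabs : ∀ k (t : ℝ), ‖Complex.exp (mu k * t)‖ = Real.exp (-(r k) * t) := by
    intro k t
    rw [hmu k]
    have : ((-(r k) : ℝ) : ℂ) * (t : ℂ) = ((-(r k) * t : ℝ) : ℂ) := by push_cast; ring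
    rw [this, Complex.norm_exp, Complex.ofReal_re]
  set C0 : ℝ := (n : ℝ)⁻¹ * ∑ k ∈ S, ‖G k 0‖ with hC0def
  have hC0nonneg : 0 ≤ C0 := by
    rw [hC0def]
    have h : 0 ≤ ∑ k ∈ S, ‖G k 0‖ :=
      Finset.sum_nonneg fun k _ => norm_nonneg _
    exact mul_nonneg (inv_nonneg.mpr hnR.le) h
  have hbound : ∀ t : ℝ, 0 ≤ t → ∀ j : Fin n,
      ‖X t j - L j‖ ≤ C0 * Real.exp (-δ * t) := by
    intro t ht j
    rw [hfinal t j]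
    rw [norm_mul]
    have habs_inv : ‖((n : ℂ)⁻¹)‖ = (n : ℝ)⁻¹ := by
      rw [norm_inv]
      simp [Complex.norm_natCast]
    rw [habs_inv]
    have hterm : ∀ k ∈ S, ‖(ξ ^ (j : ℕ)) ^ (k : ℕ) * (Complex.exp (mu k * t) * G k 0)‖
        ≤ Real.exp (-δ * t) * ‖G k 0‖ := by
      intro k hk
      rw [norm_mul, norm_mul, norm_pow, norm_pow, hξabs, one_pow, one_pow, one_mul, hexpabs k t]
      have h1 : Real.exp (-(r k) * t) ≤ Real.exp (-δ * t) := by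
        apply Real.exp_le_exp.mpr
        have := hδle k hk
        nlinarith
      exact mul_le_mul_of_nonneg_right h1 (norm_nonneg _)
    have hsumle : ‖∑ k ∈ S, (ξ ^ (j : ℕ)) ^ (k : ℕ) * (Complex.exp (mu k * t) * G k 0)‖
        ≤ ∑ k ∈ S, Real.exp (-δ * t) * ‖G k 0‖ :=
      le_trans (norm_sum_le _ _) (Finset.sum_le_sum hterm)
    calc (n : ℝ)⁻¹ * ‖∑ k ∈ S, (ξ ^ (j : ℕ)) ^ (k : ℕ) *
            (Complex.exp (mu k * t) * G k 0)‖
        ≤ (n : ℝ)⁻¹ * ∑ k ∈ S, Real.exp (-δ * t) * ‖G k 0‖ := by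
          exact mul_le_mul_of_nonneg_left hsumle (inv_nonneg.mpr hnR.le)
      _ = C0 * Real.exp (-δ * t) := by
          rw [hC0def, ← Finset.mul_sum]
          ring
  -- assemble
  have hLnorm : ∀ t : ℝ, 0 ≤ t → ‖X t - L‖ ≤ (C0 + 1) * Real.exp (-δ * t) := by
    intro t ht
    have hCpos : (0 : ℝ) ≤ (C0 + 1) * Real.exp (-δ * t) :=
      mul_nonneg (by linarith) (Real.exp_nonneg _)
    rw [pi_norm_le_iff_of_nonneg hCpos]
    intro j
    have h1 : ‖(X t - L) j‖ = ‖X t j - L j‖ := by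
      simp
    rw [h1]
    have h2 : C0 * Real.exp (-δ * t) ≤ (C0 + 1) * Real.exp (-δ * t) := by
      have := Real.exp_pos (-δ * t); nlinarith
    linarith [hbound t ht j]
  constructor
  · have hgoal : Tendsto (fun t => X t - L) atTop (nhds 0) := by
      apply squeeze_zero_norm'
      · filter_upwards [eventually_ge_atTop (0 : ℝ)] with t ht
        exact hLnorm t ht
      · have h1 : Tendsto (fun t : ℝ => δ * t) atTop atTop :=
          Tendsto.const_mul_atTop hδpos tendsto_id
        have h2 : Tendsto (fun t : ℝ => Real.exp (-(δ * t))) atTop (nhds 0) :=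
          Real.tendsto_exp_neg_atTop_nhds_zero.comp h1
        have h3 : Tendsto (fun t : ℝ => (C0 + 1) * Real.exp (-(δ * t))) atTop
            (nhds ((C0 + 1) * 0)) := h2.const_mul _
        simpa [neg_mul] using h3
    have h4 := hgoal.add_const L
    simpa using h4
  · exact ⟨C0 + 1, by linarith, δ, hδpos, hLnorm⟩
end
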